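/- For every real p ≥ 3: √(p/12) ≤ Γ(p/2)/(Γ((p−1)/2)·Γ(1/2)) ≤ (1/2)·√(p−2), where Γ is the Gamma function and Γ(1/2) = √π. -/

import Mathlib

open Filter Finset Real Topology

private lemma prod_pos_aux (w : ℝ) (hw : 0 < w) (n : ℕ) :
    0 < ∏ j ∈ Finset.range (n + 1), (w + (j : ℝ)) := by
  apply Finset.prod_pos
  intro j _
  positivity

/-- Master inequality: for `0 < z ≤ x`,
`√(x/z) ≤ Γ(x+1/2)Γ(z)/(Γ(x)Γ(z+1/2))`. -/
private lemma master {z x : ℝ} (hz : 0 < z) (hzx : z ≤ x) :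
    Real.sqrt (x / z) ≤
      Real.Gamma (x + 1/2) * Real.Gamma z / (Real.Gamma x * Real.Gamma (z + 1/2)) := by
  have hx : 0 < x := lt_of_lt_of_le hz hzx
  set q : ℕ → ℝ := fun j => ((x + j) * (z + 1/2 + j)) / ((x + 1/2 + j) * (z + j)) with hq
  set b : ℕ → ℝ := fun j => ((x + j) * (z + 1 + j)) / ((z + j) * (x + 1 + j)) with hb
  set Q : ℕ → ℝ := fun n => ∏ j ∈ Finset.range (n + 1), q j with hQ
  have hbq : ∀ j : ℕ, b j ≤ (q j) ^ 2 := by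
    intro j
    have hj : (0:ℝ) ≤ (j:ℝ) := Nat.cast_nonneg j
    have hs : 0 ≤ x - z := sub_nonneg.mpr hzx
    simp only [hb, hq]
    rw [div_pow, div_le_div_iff₀ (by positivity) (by positivity)]
    nlinarith [mul_pos hz hx, sq_nonneg (x - z), mul_nonneg hs hj, mul_nonneg hs hz.le,
      mul_nonneg (mul_nonneg hs hj) hj, mul_nonneg (mul_nonneg hs hz.le) hj,
      mul_nonneg (mul_nonneg hs hz.le) hz.le,
      mul_nonneg (mul_nonneg hs hs) hj, mul_nonneg (mul_nonneg hs hs) hz.le,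
      mul_nonneg hs hs, hz.le, hx.le, hj]
  have hBn : ∀ n : ℕ, ∏ j ∈ Finset.range (n + 1), b j
      = x * (z + n + 1) / (z * (x + n + 1)) := by
    intro n
    induction n with
    | zero =>
      simp only [hb, Finset.prod_range_one, Nat.cast_zero]
      norm_num
    | succ n ih =>
      rw [Finset.prod_range_succ, ih]
      simp only [hb]
      have h1 : (0:ℝ) < z + n := by positivity
      have h2 : (0:ℝ) < x + n + 1 := by positivity
      have h3 : (0:ℝ) < z + n + 1 := by positivity
      have h4 : (0:ℝ) < x + n + 2 := by positivity
      push_cast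
      field_simp
      ring
  have hQsq : ∀ n : ℕ, x * (z + n + 1) / (z * (x + n + 1)) ≤ (Q n) ^ 2 := by
    intro n
    rw [← hBn n, hQ]
    simp only [← Finset.prod_pow]
    apply Finset.prod_le_prod
    · intro j _
      apply le_of_lt
      simp only [hb]
      apply div_pos <;> apply mul_pos <;> positivity
    · intro j _
      exact hbq j
  have hQeq : ∀ n : ℕ, 1 ≤ n → Q n =
      Real.GammaSeq (x + 1/2) n * Real.GammaSeq z n /
        (Real.GammaSeq x n * Real.GammaSeq (z + 1/2) n) := by
    intro n hn
    have hn0 : (0:ℝ) < (n:ℝ) := by exact_mod_cast hn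
    have hfac : (0:ℝ) < (n.factorial : ℝ) := by exact_mod_cast n.factorial_pos
    have hP1 := prod_pos_aux x hx n
    have hP2 := prod_pos_aux z hz n
    have hP3 := prod_pos_aux (x + 1/2) (by linarith) n
    have hP4 := prod_pos_aux (z + 1/2) (by linarith) n
    have hpow : (n:ℝ) ^ (x + 1/2) * (n:ℝ) ^ z = (n:ℝ) ^ x * (n:ℝ) ^ (z + 1/2) := by
      rw [← Real.rpow_add hn0, ← Real.rpow_add hn0]
      ring_nf
    have hQform : Q n = (∏ j ∈ Finset.range (n + 1), (x + (j:ℝ))) *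
        (∏ j ∈ Finset.range (n + 1), (z + 1/2 + (j:ℝ))) /
        ((∏ j ∈ Finset.range (n + 1), (x + 1/2 + (j:ℝ))) *
         (∏ j ∈ Finset.range (n + 1), (z + (j:ℝ)))) := by
      rw [hQ]
      simp only [hq]
      rw [Finset.prod_div_distrib, Finset.prod_mul_distrib, Finset.prod_mul_distrib]
    rw [hQform, Real.GammaSeq, Real.GammaSeq, Real.GammaSeq, Real.GammaSeq]
    rw [div_mul_div_comm, div_mul_div_comm, div_div_div_comm]
    have hA : (n:ℝ) ^ (x + 1/2) * (n.factorial:ℝ) * ((n:ℝ) ^ z * (n.factorial:ℝ))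
        = (n:ℝ) ^ x * (n.factorial:ℝ) * ((n:ℝ) ^ (z + 1/2) * (n.factorial:ℝ)) := by
      calc (n:ℝ) ^ (x + 1/2) * (n.factorial:ℝ) * ((n:ℝ) ^ z * (n.factorial:ℝ))
          = ((n:ℝ) ^ (x + 1/2) * (n:ℝ) ^ z) * ((n.factorial:ℝ) * (n.factorial:ℝ)) := by ring
        _ = ((n:ℝ) ^ x * (n:ℝ) ^ (z + 1/2)) * ((n.factorial:ℝ) * (n.factorial:ℝ)) := by
            rw [hpow]
        _ = (n:ℝ) ^ x * (n.factorial:ℝ) * ((n:ℝ) ^ (z + 1/2) * (n.factorial:ℝ)) := by ring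
    rw [hA]
    have hA0 : (0:ℝ) < (n:ℝ) ^ x * (n.factorial:ℝ) * ((n:ℝ) ^ (z + 1/2) * (n.factorial:ℝ)) := by
      have := Real.rpow_pos_of_pos hn0 x
      have := Real.rpow_pos_of_pos hn0 (z + 1/2)
      positivity
    rw [div_div_div_eq]
    rw [div_eq_div_iff (by positivity) (by positivity)]
    ring
  -- limits
  have hGx : 0 < Real.Gamma x := Real.Gamma_pos_of_pos hx
  have hGz : 0 < Real.Gamma z := Real.Gamma_pos_of_pos hz
  have hGx2 : 0 < Real.Gamma (x + 1/2) := Real.Gamma_pos_of_pos (by linarith)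
  have hGz2 : 0 < Real.Gamma (z + 1/2) := Real.Gamma_pos_of_pos (by linarith)
  set L : ℝ := Real.Gamma (x + 1/2) * Real.Gamma z / (Real.Gamma x * Real.Gamma (z + 1/2))
    with hL
  have hLpos : 0 < L := by
    apply div_pos (mul_pos hGx2 hGz) (mul_pos hGx hGz2)
  have hQtend : Tendsto Q atTop (𝓝 L) := by
    have h1 : Tendsto (fun n : ℕ => Real.GammaSeq (x + 1/2) n * Real.GammaSeq z n /
        (Real.GammaSeq x n * Real.GammaSeq (z + 1/2) n)) atTop (𝓝 L) := by
      exact Tendsto.div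
        ((Real.GammaSeq_tendsto_Gamma (x + 1/2)).mul (Real.GammaSeq_tendsto_Gamma z))
        ((Real.GammaSeq_tendsto_Gamma x).mul (Real.GammaSeq_tendsto_Gamma (z + 1/2)))
        (ne_of_gt (mul_pos hGx hGz2))
    apply h1.congr'
    filter_upwards [eventually_ge_atTop 1] with n hn
    exact (hQeq n hn).symm
  have hBtend : Tendsto (fun n : ℕ => x * (z + n + 1) / (z * (x + n + 1))) atTop
      (𝓝 (x / z)) := by
    have h2 : Tendsto (fun n : ℕ => (x + (n:ℝ) + 1)) atTop atTop := by
      apply tendsto_atTop_add_const_right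
      apply tendsto_atTop_add_const_left
      exact tendsto_natCast_atTop_atTop
    have h3 : Tendsto (fun n : ℕ => 1 / (x + (n:ℝ) + 1)) atTop (𝓝 0) := by
      simpa [one_div, Pi.inv_def] using h2.inv_tendsto_atTop
    have h4 : Tendsto (fun n : ℕ => x / z * (1 + (z - x) * (1 / (x + (n:ℝ) + 1)))) atTop
        (𝓝 (x / z * (1 + (z - x) * 0))) :=
      tendsto_const_nhds.mul (tendsto_const_nhds.add (tendsto_const_nhds.mul h3))
    simp only [mul_zero, add_zero, mul_one] at h4
    apply h4.congr
    intro n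
    have hx' : (0:ℝ) < x + (n:ℝ) + 1 := by positivity
    rw [eq_div_iff (by positivity)]
    field_simp
    ring_nf
  have hle : x / z ≤ L ^ 2 :=
    le_of_tendsto_of_tendsto' hBtend (hQtend.pow 2) (fun n => hQsq n)
  calc Real.sqrt (x / z) ≤ Real.sqrt (L ^ 2) := Real.sqrt_le_sqrt hle
    _ = L := by rw [Real.sqrt_sq hLpos.le]

theorem gamma_ratio_bounds : ∀ p : ℝ, 3 ≤ p →
    Real.sqrt (p / 12) ≤ Real.Gamma (p / 2) / (Real.Gamma ((p - 1) / 2) * Real.Gamma (1 / 2)) ∧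
    Real.Gamma (p / 2) / (Real.Gamma ((p - 1) / 2) * Real.Gamma (1 / 2)) ≤
      (1 / 2) * Real.sqrt (p - 2) := by
  intro p hp
  have hsqrtpi : Real.Gamma (1/2 : ℝ) = Real.sqrt π := Real.Gamma_one_half_eq
  have hpipos : (0:ℝ) < Real.sqrt π := Real.sqrt_pos.mpr Real.pi_pos
  have hG32 : Real.Gamma (1/2 + 1 : ℝ) = Real.sqrt π / 2 := by
    rw [Real.Gamma_add_one (by norm_num), hsqrtpi]
    ring
  have hGp1 : 0 < Real.Gamma ((p - 1) / 2) := Real.Gamma_pos_of_pos (by linarith)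
  constructor
  · -- lower bound : master with z = 1, x = (p-1)/2
    have hx1 : (1:ℝ) ≤ (p - 1) / 2 := by linarith
    have hM := master (z := 1) (x := (p - 1) / 2) one_pos hx1
    rw [Real.Gamma_one, show (1:ℝ) + 1/2 = 1/2 + 1 by ring, hG32, div_one, mul_one] at hM
    rw [show (p - 1) / 2 + 1/2 = p / 2 by ring] at hM
    -- hM : √((p-1)/2) ≤ Γ(p/2) / (Γ((p-1)/2) * (√π/2))
    have heq : Real.Gamma (p/2) / (Real.Gamma ((p-1)/2) * (Real.sqrt π / 2))
        = 2 * (Real.Gamma (p/2) / (Real.Gamma ((p-1)/2) * Real.sqrt π)) := by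
      field_simp
    rw [heq] at hM
    have hstep : Real.sqrt (p / 12) ≤ Real.sqrt ((p - 1) / 2) / 2 := by
      have h9 : Real.sqrt ((p - 1) / 2) / 2 = Real.sqrt ((p - 1) / 8) := by
        rw [show (p-1)/8 = ((p-1)/2)/4 by ring,
          Real.sqrt_div (by linarith : (0:ℝ) ≤ (p-1)/2) 4,
          show (4:ℝ) = 2 ^ 2 by norm_num, Real.sqrt_sq (by norm_num)]
      rw [h9]
      apply Real.sqrt_le_sqrt
      linarith
    rw [hsqrtpi]
    linarith
  · -- upper bound : master with z = 1/2, x = (p-2)/2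
    have hy : (1:ℝ)/2 ≤ (p - 2) / 2 := by linarith
    have hypos : (0:ℝ) < (p - 2) / 2 := by linarith
    have hM := master (z := 1/2) (x := (p - 2) / 2) (by norm_num) hy
    rw [show (1:ℝ)/2 + 1/2 = 1 by norm_num, Real.Gamma_one, mul_one] at hM
    rw [hsqrtpi] at hM
    rw [show (p - 2) / 2 + 1/2 = (p - 1) / 2 by ring] at hM
    rw [show (p - 2) / 2 / (1/2 : ℝ) = p - 2 by ring] at hM
    -- hM : √(p-2) ≤ Γ((p-1)/2) * √π / Γ((p-2)/2)
    have hGy : 0 < Real.Gamma ((p - 2) / 2) := Real.Gamma_pos_of_pos hypos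
    have hmul : Real.sqrt (p - 2) * Real.Gamma ((p - 2) / 2)
        ≤ Real.Gamma ((p - 1) / 2) * Real.sqrt π := by
      rw [← le_div_iff₀ hGy]
      exact hM
    have hGamp : Real.Gamma (p / 2) = (p - 2) / 2 * Real.Gamma ((p - 2) / 2) := by
      rw [show p / 2 = (p - 2) / 2 + 1 by ring, Real.Gamma_add_one (ne_of_gt hypos)]
    rw [div_le_iff₀ (by positivity), hGamp, hsqrtpi]
    have hsq : Real.sqrt (p - 2) * Real.sqrt (p - 2) = p - 2 :=
      Real.mul_self_sqrt (by linarith)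
    calc (p - 2) / 2 * Real.Gamma ((p - 2) / 2)
        = (Real.sqrt (p - 2) / 2) * (Real.sqrt (p - 2) * Real.Gamma ((p - 2) / 2)) := by
          rw [show Real.sqrt (p-2) / 2 * (Real.sqrt (p-2) * Real.Gamma ((p-2)/2))
            = (Real.sqrt (p-2) * Real.sqrt (p-2)) * Real.Gamma ((p-2)/2) / 2 by ring, hsq]
          ring
      _ ≤ (Real.sqrt (p - 2) / 2) * (Real.Gamma ((p - 1) / 2) * Real.sqrt π) := by
          apply mul_le_mul_of_nonneg_left hmul (by positivity)
      _ = 1 / 2 * Real.sqrt (p - 2) * (Real.Gamma ((p - 1) / 2) * Real.sqrt π) := by ring
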